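/- Let r ≥ 2 be an integer. Then the product over k = 1,...,r of the sums of the entries of the vectors v_k satisfies ∏_{k=1}^{r} (e_r^T v_k) = (−1)^{⌊r/2⌋} · 2^{r−1}, where e_r^T v_k denotes the sum of the r entries of v_k. -/

import Mathlib

open Matrix Real BigOperators

noncomputable section

/-- `α_k = (2k - 1)π / (2r)`. -/
def alphaA (r k : ℕ) : ℝ := (2 * (k : ℝ) - 1) * Real.pi / (2 * (r : ℝ))

/-- The vector `v_k` whose `j`-th entry (1-based `j`) is
`(-1)^(r-j) * (1 + ∑_{i=1}^{r-j} 2 cos(i α_k))`; here 0-based indexing. -/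
def vvec (r k : ℕ) : Fin r → ℝ :=
  fun j => (-1 : ℝ) ^ (r - 1 - (j : ℕ)) *
    (1 + ∑ i ∈ Finset.Icc 1 (r - 1 - (j : ℕ)), 2 * Real.cos ((i : ℝ) * alphaA r k))

section Aux
open Finset Polynomial Complex

lemma one_sub_exp_two (θ : ℂ) :
    1 - Complex.exp (2*θ*Complex.I) = -2*Complex.I*Complex.exp (θ*Complex.I) * Complex.sin θ := by
  rw [Complex.sin]
  have h1 : Complex.exp (θ*Complex.I) * Complex.exp (-θ*Complex.I) = 1 := by
    rw [← Complex.exp_add]; ring_nf; exact Complex.exp_zero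
  have h2 : Complex.exp (θ*Complex.I) * Complex.exp (θ*Complex.I) = Complex.exp (2*θ*Complex.I) := by
    rw [← Complex.exp_add]; ring_nf
  have hI : Complex.I^2 = -1 := Complex.I_sq
  linear_combination (-1 : ℂ) * h1 + h2 + (Complex.exp (θ*Complex.I) * Complex.exp (-θ*Complex.I) - Complex.exp (θ*Complex.I)^2) * hI

lemma prod_S (r : ℕ) (hr : 1 ≤ r) :
    ∏ z ∈ (Polynomial.nthRootsFinset (2*r) (1:ℂ) \ Polynomial.nthRootsFinset r (1:ℂ)), (1 - z) = 2 := by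
  have h2r : 0 < 2*r := by omega
  have hprim := Complex.isPrimitiveRoot_exp (2*r) (by omega)
  have hprim2 := Complex.isPrimitiveRoot_exp r (by omega)
  have hsub : Polynomial.nthRootsFinset r (1:ℂ) ⊆ Polynomial.nthRootsFinset (2*r) (1:ℂ) := by
    intro x hx
    rw [Polynomial.mem_nthRootsFinset h2r]
    rw [Polynomial.mem_nthRootsFinset (by omega : 0 < r)] at hx
    rw [mul_comm, pow_mul, hx, one_pow]
  have h1 : (X:ℂ[X])^(2*r) - 1 = ∏ z ∈ Polynomial.nthRootsFinset (2*r) (1:ℂ), (X - C z) :=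
    Polynomial.X_pow_sub_one_eq_prod h2r hprim
  have h2 : (X:ℂ[X])^r - 1 = ∏ z ∈ Polynomial.nthRootsFinset r (1:ℂ), (X - C z) :=
    Polynomial.X_pow_sub_one_eq_prod (by omega) hprim2
  have hsplit : ((X:ℂ[X])^r + 1) * ((X:ℂ[X])^r - 1)
      = (∏ z ∈ (Polynomial.nthRootsFinset (2*r) (1:ℂ) \ Polynomial.nthRootsFinset r (1:ℂ)), (X - C z)) * ((X:ℂ[X])^r - 1) := by
    rw [show ((X:ℂ[X])^r + 1) * ((X:ℂ[X])^r - 1) = (X:ℂ[X])^(2*r) - 1 by rw [pow_mul]; ring,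
        h1, ← Finset.prod_sdiff hsub, h2]
  have hne : ((X:ℂ[X])^r - 1) ≠ 0 := by
    intro h
    have := congrArg (Polynomial.eval 0) h
    simp [zero_pow (by omega : r ≠ 0)] at this
  have hP : (∏ z ∈ (Polynomial.nthRootsFinset (2*r) (1:ℂ) \ Polynomial.nthRootsFinset r (1:ℂ)), (X - C z))
      = (X:ℂ[X])^r + 1 := (mul_right_cancel₀ hne hsplit).symm
  have := congrArg (Polynomial.eval 1) hP
  simpa [Polynomial.eval_prod, one_add_one_eq_two] using this

lemma sum_two_mul_sub_one (r : ℕ) : ∑ k ∈ Finset.Icc 1 r, (2*(k:ℝ)-1) = (r:ℝ)^2 := by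
  induction r with
  | zero => simp
  | succ n ih =>
    rw [Finset.sum_Icc_succ_top (by omega)]
    rw [ih]; push_cast; ring

lemma prod_sin_alpha (r : ℕ) (hr : 1 ≤ r) :
    ∏ k ∈ Finset.Icc 1 r, Real.sin (alphaA r k) = 2 / 2^r := by
  have hrC : (r:ℂ) ≠ 0 := Nat.cast_ne_zero.mpr (by omega)
  have hrR : (r:ℝ) ≠ 0 := Nat.cast_ne_zero.mpr (by omega)
  set ζ : ℂ := Complex.exp (2 * ↑Real.pi * Complex.I / (↑(2*r) : ℂ)) with hζ
  have hprim : IsPrimitiveRoot ζ (2*r) := Complex.isPrimitiveRoot_exp (2*r) (by omega)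
  have hprim2 := Complex.isPrimitiveRoot_exp r (by omega)
  set g : ℕ → ℂ := fun k => ζ^(2*k-1) with hg
  have hsub_aux : Polynomial.nthRootsFinset r (1:ℂ) ⊆ Polynomial.nthRootsFinset (2*r) (1:ℂ) := by
    intro x hx
    rw [Polynomial.mem_nthRootsFinset (by omega : 0 < 2*r)]
    rw [Polynomial.mem_nthRootsFinset (by omega : 0 < r)] at hx
    rw [mul_comm, pow_mul, hx, one_pow]
  have hζr : ζ^r = -1 := by
    rw [hζ, ← Complex.exp_nat_mul,
        show (r:ℂ) * (2 * ↑Real.pi * Complex.I / (↑(2*r) : ℂ)) = ↑Real.pi * Complex.I by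
          push_cast; field_simp]
    exact Complex.exp_pi_mul_I
  have hgr : ∀ k, 1 ≤ k → (g k)^r = -1 := by
    intro k hk
    rw [hg]
    simp only
    rw [← pow_mul, show (2*k-1)*r = r*(2*k-1) by ring, pow_mul, hζr]
    exact Odd.neg_one_pow ⟨k-1, by omega⟩
  have hinj : Set.InjOn g (Finset.Icc 1 r) := by
    intro a ha b hb hab
    simp only [Finset.coe_Icc, Set.mem_Icc] at ha hb
    have := hprim.pow_inj (by omega : 2*a-1 < 2*r) (by omega : 2*b-1 < 2*r) hab
    omega
  have himg : (Finset.Icc 1 r).image g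
      = Polynomial.nthRootsFinset (2*r) (1:ℂ) \ Polynomial.nthRootsFinset r (1:ℂ) := by
    have hsubset : (Finset.Icc 1 r).image g
        ⊆ Polynomial.nthRootsFinset (2*r) (1:ℂ) \ Polynomial.nthRootsFinset r (1:ℂ) := by
      intro z hz
      obtain ⟨k, hk, rfl⟩ := Finset.mem_image.mp hz
      obtain ⟨hk1, hk2⟩ := Finset.mem_Icc.mp hk
      rw [Finset.mem_sdiff, Polynomial.mem_nthRootsFinset (by omega),
          Polynomial.mem_nthRootsFinset (by omega)]
      constructor
      · rw [mul_comm, pow_mul, hgr k hk1]; norm_num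
      · rw [hgr k hk1]; intro h; exact absurd h (by norm_num)
    apply Finset.eq_of_subset_of_card_le hsubset
    rw [Finset.card_sdiff_of_subset hsub_aux, Finset.card_image_of_injOn hinj]
    · rw [hprim.card_nthRootsFinset, hprim2.card_nthRootsFinset, Nat.card_Icc]; omega
  have hprod2 : ∏ k ∈ Finset.Icc 1 r, (1 - g k) = 2 := by
    rw [← Finset.prod_image (fun a ha b hb => hinj (by simpa using ha) (by simpa using hb)), himg]
    exact prod_S r hr
  have hfact : ∀ k ∈ Finset.Icc 1 r, 1 - g k
      = -2 * Complex.I * Complex.exp ((alphaA r k : ℂ) * Complex.I) * ((Real.sin (alphaA r k) : ℝ) : ℂ) := by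
    intro k hk
    obtain ⟨hk1, hk2⟩ := Finset.mem_Icc.mp hk
    have hgk : g k = Complex.exp (2 * (alphaA r k : ℂ) * Complex.I) := by
      rw [hg]
      simp only
      rw [hζ, ← Complex.exp_nat_mul]
      congr 1
      have hcast : ((2*k-1 : ℕ) : ℂ) = 2*(k:ℂ)-1 := by
        push_cast [Nat.cast_sub (by omega : 1 ≤ 2*k)]; ring
      rw [hcast]
      have : ((alphaA r k : ℝ) : ℂ) = (2*(k:ℂ)-1) * (Real.pi : ℂ) / (2*(r:ℂ)) := by
        unfold alphaA; push_cast; ring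
      rw [this]
      push_cast
      field_simp
    rw [hgk, one_sub_exp_two, Complex.ofReal_sin]
  rw [Finset.prod_congr rfl hfact, Finset.prod_mul_distrib, Finset.prod_mul_distrib] at hprod2
  rw [Finset.prod_const, Nat.card_Icc, ← Complex.exp_sum] at hprod2
  have hsum : ∑ k ∈ Finset.Icc 1 r, (alphaA r k : ℝ) = r * Real.pi / 2 := by
    unfold alphaA
    rw [← Finset.sum_div, ← Finset.sum_mul, sum_two_mul_sub_one]
    field_simp
  have hsumC : ∑ k ∈ Finset.Icc 1 r, ((alphaA r k : ℂ) * Complex.I)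
      = ((r * Real.pi / 2 : ℝ) : ℂ) * Complex.I := by
    rw [← Finset.sum_mul, ← Complex.ofReal_sum, hsum]
  rw [hsumC] at hprod2
  have hexp : Complex.exp (((r * Real.pi / 2 : ℝ) : ℂ) * Complex.I) = Complex.I ^ r := by
    rw [show (((r * Real.pi / 2 : ℝ)) : ℂ) * Complex.I = r * (((Real.pi/2 : ℝ) : ℂ) * Complex.I) by
      push_cast; ring, Complex.exp_nat_mul]
    congr 1
    rw [Complex.exp_mul_I]
    simp [← Complex.ofReal_cos, ← Complex.ofReal_sin]
  rw [hexp, ← Complex.ofReal_prod] at hprod2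
  have hcoef : (-2 * Complex.I) ^ (r + 1 - 1) * Complex.I ^ r = 2 ^ r := by
    rw [show r + 1 - 1 = r by omega, ← mul_pow]
    norm_num [mul_assoc, Complex.I_mul_I]
  rw [hcoef] at hprod2
  have h2r : ((2:ℂ))^r ≠ 0 := pow_ne_zero _ two_ne_zero
  have : ((∏ k ∈ Finset.Icc 1 r, Real.sin (alphaA r k) : ℝ) : ℂ) = 2 / 2^r := by
    rw [eq_div_iff h2r]
    linear_combination hprod2
  have := Complex.ofReal_injective (by push_cast [this]; norm_num : ((∏ k ∈ Finset.Icc 1 r, Real.sin (alphaA r k) : ℝ) : ℂ) = ((2 / 2^r : ℝ) : ℂ))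
  exact this

end Aux

section Aux2
open Finset Real

lemma sum_Icc_eq_range (n : ℕ) (f : ℕ → ℝ) :
    ∑ i ∈ Finset.Icc 1 n, f i = ∑ i ∈ Finset.range n, f (1 + i) := by
  rw [← Finset.Ico_add_one_right_eq_Icc, Finset.sum_Ico_eq_sum_range]
  simp

lemma sin_mul_term (α : ℝ) (m : ℕ) :
    Real.sin α * ((-1:ℝ)^m * (1 + ∑ i ∈ Finset.Icc 1 m, 2 * Real.cos ((i:ℝ) * α)))
      = (-1:ℝ)^m * Real.sin ((m:ℝ)*α) - (-1:ℝ)^(m+1) * Real.sin (((m:ℝ)+1)*α) := by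
  set p : ℕ → ℝ := fun j => Real.sin (((j:ℝ)+1)*α) + Real.sin ((j:ℝ)*α) with hp
  have key : ∑ i ∈ Finset.Icc 1 m, Real.sin α * (2 * Real.cos ((i:ℝ) * α))
      = p m - p 0 := by
    rw [sum_Icc_eq_range]
    rw [show (∑ i ∈ Finset.range m, Real.sin α * (2 * Real.cos (((1+i:ℕ):ℝ) * α)))
        = ∑ i ∈ Finset.range m, (p (i+1) - p i) by
      apply Finset.sum_congr rfl
      intro i _
      simp only [hp]
      push_cast
      rw [show ((i:ℝ)+1+1)*α = ((i:ℝ)+1)*α + α by ring,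
          show (i:ℝ)*α = ((i:ℝ)+1)*α - α by ring,
          Real.sin_add, Real.sin_sub]
      ring]
    exact Finset.sum_range_sub p m
  have expand : Real.sin α * (1 + ∑ i ∈ Finset.Icc 1 m, 2 * Real.cos ((i:ℝ) * α))
      = Real.sin α + ∑ i ∈ Finset.Icc 1 m, Real.sin α * (2 * Real.cos ((i:ℝ) * α)) := by
    rw [mul_add, Finset.mul_sum, mul_one]
  have : Real.sin α * ((-1:ℝ)^m * (1 + ∑ i ∈ Finset.Icc 1 m, 2 * Real.cos ((i:ℝ) * α)))
      = (-1:ℝ)^m * (Real.sin α + (p m - p 0)) := by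
    rw [← key, ← expand]; ring
  rw [this]
  simp only [hp]
  push_cast
  simp [pow_succ]
  ring

lemma sin_alpha_mul_sum (r k : ℕ) (hr : 2 ≤ r) (hk : k ∈ Finset.Icc 1 r) :
    Real.sin (alphaA r k) * (∑ j, vvec r k j) = (-1:ℝ)^(r+k) := by
  obtain ⟨hk1, hk2⟩ := Finset.mem_Icc.mp hk
  set α := alphaA r k with hα
  set T : ℕ → ℝ := fun m => (-1:ℝ)^m * (1 + ∑ i ∈ Finset.Icc 1 m, 2 * Real.cos ((i:ℝ) * α)) with hT
  have hsum : (∑ j, vvec r k j) = ∑ m ∈ Finset.range r, T m := by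
    have : ∀ j : Fin r, vvec r k j = T (r - 1 - (j:ℕ)) := fun j => rfl
    simp only [this]
    rw [Fin.sum_univ_eq_sum_range (fun j => T (r - 1 - j)) r]
    exact Finset.sum_range_reflect T r
  set h : ℕ → ℝ := fun m => (-1:ℝ)^m * Real.sin ((m:ℝ)*α) with hh
  have htel : Real.sin α * (∑ m ∈ Finset.range r, T m) = h 0 - h r := by
    rw [Finset.mul_sum]
    have : ∀ m ∈ Finset.range r, Real.sin α * T m = h m - h (m+1) := by
      intro m _
      have := sin_mul_term α m
      simp only [hT, hh]
      push_cast
      push_cast at this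
      linarith [this]
    rw [Finset.sum_congr rfl this]
    have := Finset.sum_range_sub h r
    have h2 : ∑ m ∈ Finset.range r, (h m - h (m+1)) = -∑ m ∈ Finset.range r, (h (m+1) - h m) := by
      rw [← Finset.sum_neg_distrib]
      apply Finset.sum_congr rfl
      intro m _; ring
    rw [h2, this]; ring
  have hr0 : (r:ℝ) ≠ 0 := by positivity
  have hra : (r:ℝ) * α = Real.pi/2 + ((k-1:ℕ):ℝ) * Real.pi := by
    rw [hα]
    unfold alphaA
    rw [Nat.cast_sub hk1]
    push_cast
    field_simp
    ring
  have hhr : h r = (-1:ℝ)^r * (-1:ℝ)^(k-1) := by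
    simp only [hh, hra, Real.sin_add_nat_mul_pi, Real.sin_pi_div_two]
    ring
  have hk' : k = (k-1) + 1 := by omega
  rw [hsum, htel, hhr]
  simp only [hh]
  rw [show r + k = (r + (k-1)) + 1 by omega, pow_add, pow_add]
  simp [pow_succ]

lemma sin_alpha_pos (r k : ℕ) (hr : 1 ≤ r) (hk : k ∈ Finset.Icc 1 r) :
    0 < Real.sin (alphaA r k) := by
  obtain ⟨hk1, hk2⟩ := Finset.mem_Icc.mp hk
  have hk1' : (1:ℝ) ≤ (k:ℝ) := by exact_mod_cast hk1
  have hk2' : (k:ℝ) ≤ (r:ℝ) := by exact_mod_cast hk2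
  have hr' : (1:ℝ) ≤ (r:ℝ) := by exact_mod_cast hr
  apply Real.sin_pos_of_pos_of_lt_pi
  · unfold alphaA
    apply div_pos
    · nlinarith [Real.pi_pos]
    · nlinarith
  · unfold alphaA
    rw [div_lt_iff₀ (by nlinarith)]
    nlinarith [Real.pi_pos]

lemma sign_key (r : ℕ) : (-1:ℝ)^(∑ k ∈ Finset.Icc 1 r, (r+k)) = (-1:ℝ)^(r/2) := by
  have hG : 2 * ∑ k ∈ Finset.Icc 1 r, k = r*(r+1) := by
    induction r with
    | zero => simp
    | succ n ih => rw [Finset.sum_Icc_succ_top (by omega), Nat.mul_add, ih]; ring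
  have hSum : ∑ k ∈ Finset.Icc 1 r, (r+k) = r*r + ∑ k ∈ Finset.Icc 1 r, k := by
    rw [Finset.sum_add_distrib, Finset.sum_const, Nat.card_Icc, smul_eq_mul,
      Nat.add_sub_cancel]
  obtain ⟨t, rfl | rfl⟩ := Nat.even_or_odd' r
  · have hS : ∑ k ∈ Finset.Icc 1 (2*t), k = t*(2*t+1) :=
      Nat.eq_of_mul_eq_mul_left two_pos (hG.trans (by ring))
    rw [hSum, hS, show 2*t*(2*t) + t*(2*t+1) = t*(6*t+1) by ring]
    obtain ⟨s, rfl | rfl⟩ := Nat.even_or_odd' t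
    · rw [show 2*(2*s)/2 = 2*s by omega,
        Even.neg_one_pow ⟨s*(12*s+1), by ring⟩, Even.neg_one_pow ⟨s, by ring⟩]
    · rw [show 2*(2*s+1)/2 = 2*s+1 by omega,
        Odd.neg_one_pow ⟨12*s*s+13*s+3, by ring⟩, Odd.neg_one_pow ⟨s, by ring⟩]
  · have hS : ∑ k ∈ Finset.Icc 1 (2*t+1), k = (2*t+1)*(t+1) :=
      Nat.eq_of_mul_eq_mul_left two_pos (hG.trans (by ring))
    rw [hSum, hS, show (2*t+1)*(2*t+1) + (2*t+1)*(t+1) = (2*t+1)*(3*t+2) by ring]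
    obtain ⟨s, rfl | rfl⟩ := Nat.even_or_odd' t
    · rw [show (2*(2*s)+1)/2 = 2*s by omega,
        Even.neg_one_pow ⟨(4*s+1)*(3*s+1), by ring⟩, Even.neg_one_pow ⟨s, by ring⟩]
    · rw [show (2*(2*s+1)+1)/2 = 2*s+1 by omega,
        Odd.neg_one_pow ⟨12*s*s+19*s+7, by ring⟩, Odd.neg_one_pow ⟨s, by ring⟩]

end Aux2

/-- `∏_{k=1}^{r} (e_rᵀ v_k) = (-1)^⌊r/2⌋ · 2^(r-1)`. -/
theorem prod_sum_vvec (r : ℕ) (hr : 2 ≤ r) :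
    ∏ k ∈ Finset.Icc 1 r, (∑ j, vvec r k j) = (-1 : ℝ) ^ (r / 2) * 2 ^ (r - 1) := by
  have hprod := prod_sin_alpha r (by omega)
  have key : ∀ k ∈ Finset.Icc 1 r, (∑ j, vvec r k j)
      = (-1:ℝ)^(r+k) / Real.sin (alphaA r k) := by
    intro k hk
    have h := sin_alpha_mul_sum r k hr hk
    have hs : Real.sin (alphaA r k) ≠ 0 := ne_of_gt (sin_alpha_pos r k (by omega) hk)
    rw [eq_div_iff hs]
    linear_combination h
  rw [Finset.prod_congr rfl key, Finset.prod_div_distrib, hprod,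
    Finset.prod_pow_eq_pow_sum, sign_key,
    show (2:ℝ)/2^r = ((2:ℝ)^(r-1))⁻¹ by
      rw [show r = (r-1)+1 by omega, pow_succ]
      field_simp
      rw [Nat.add_sub_cancel],
    div_inv_eq_mul]
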